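/- Suppose n ≥ 2p and let M = Γ̇ₙ − Ω. Then the row-sum vector 1ₙᵀ M has the following explicit form: its j-th entry equals φ(1)² − κ_j − ε_j for 1 ≤ j ≤ p, equals φ(1)² for p < j ≤ n − p, and equals the (n+1−j)-th-mirrored value, i.e. (1ₙᵀM)_j = (1ₙᵀM)_{n+1−j}, for n − p < j ≤ n; here φ(1) = 1 − φ₁ − ⋯ − φ_p, κ_j = Σ_{k=j}^{p} γ_k^{(u)}, and ε_j = Σ_{i=1}^{p} Ω_{i,j}. Consequently 1ₙᵀ M can be evaluated in O(n) flops (eq. (11) of the paper). -/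

import Mathlib

open Matrix Finset

/-- `c₀ = 1` and `c_l = −φ_l` for `l ≥ 1`. -/
noncomputable def cCoef (φ : ℕ → ℝ) (l : ℕ) : ℝ := if l = 0 then 1 else -φ l

/-- Autocovariances of `u_t = φ(B)a_t`:
`γ_k^{(u)} = Σ_{l=0}^{p−k} c_l c_{l+k}` for `0 ≤ k ≤ p`, and `0` for `k > p`. -/
noncomputable def gammaU (p : ℕ) (φ : ℕ → ℝ) (k : ℕ) : ℝ :=
  if k ≤ p then ∑ l ∈ Finset.range (p - k + 1), cCoef φ l * cCoef φ (l + k) else 0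

/-- The `n×n` symmetric Toeplitz matrix `Γ̇ₙ` with `(i,j)`-entry `γ_{|i−j|}^{(u)}`
(1-based indices of the paper correspond to `Fin` values plus one). -/
noncomputable def GammaDot (n p : ℕ) (φ : ℕ → ℝ) : Matrix (Fin n) (Fin n) ℝ :=
  Matrix.of fun i j => gammaU p φ (Nat.dist i.val j.val)

/-- Corner entries: `Ω_{i,j} = Σ_{k=min(i,j)}^{p−|i−j|} φ_k φ_{k+|i−j|}`
for 1-based `i, j` (an empty sum being `0`). -/
noncomputable def OmegaEntry (p : ℕ) (φ : ℕ → ℝ) (i j : ℕ) : ℝ :=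
  ∑ k ∈ Finset.Icc (min i j) (p - Nat.dist i j), φ k * φ (k + Nat.dist i j)

/-- The matrix `Ω`: zero except for the `p×p` block `Ω_{i,j}` in the upper-left corner
and its mirror image `Ω_{n+1−i,n+1−j} = Ω_{i,j}` in the lower-right corner.
(For `n ≥ 2p` the two corner blocks are disjoint.) -/
noncomputable def OmegaMat (n p : ℕ) (φ : ℕ → ℝ) : Matrix (Fin n) (Fin n) ℝ :=
  Matrix.of fun i j =>
    (if i.val + 1 ≤ p ∧ j.val + 1 ≤ p then OmegaEntry p φ (i.val + 1) (j.val + 1) else 0) +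
    (if n ≤ i.val + p ∧ n ≤ j.val + p then OmegaEntry p φ (n - i.val) (n - j.val) else 0)

/-- `φ(1) = 1 − φ₁ − ⋯ − φ_p`. -/
noncomputable def phiAtOne (p : ℕ) (φ : ℕ → ℝ) : ℝ := 1 - ∑ k ∈ Finset.Icc 1 p, φ k

/-- `κ_j = Σ_{k=j}^{p} γ_k^{(u)}`. -/
noncomputable def kappa (p : ℕ) (φ : ℕ → ℝ) (j : ℕ) : ℝ := ∑ k ∈ Finset.Icc j p, gammaU p φ k

/-- `ε_j = Σ_{i=1}^{p} Ω_{i,j}`. -/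
noncomputable def epsilonSum (p : ℕ) (φ : ℕ → ℝ) (j : ℕ) : ℝ :=
  ∑ i ∈ Finset.Icc 1 p, OmegaEntry p φ i j

/-- The `j`-th entry of the row-sum vector `1ₙᵀ M` where `M = Γ̇ₙ − Ω`. -/
noncomputable def rowSum (n p : ℕ) (φ : ℕ → ℝ) (j : Fin n) : ℝ :=
  ∑ i : Fin n, (GammaDot n p φ - OmegaMat n p φ) i j

/-- For `n ≥ 2p` and `M = Γ̇ₙ − Ω`, the row-sum vector `1ₙᵀ M` has (1-based)
`j`-th entry `φ(1)² − κ_j − ε_j` for `1 ≤ j ≤ p`, entry `φ(1)²` for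
`p < j ≤ n − p`, and mirrored value `(1ₙᵀM)_j = (1ₙᵀM)_{n+1−j}` for
`n − p < j ≤ n` (eq. (11) of the paper). -/
lemma sum_c_eq (p : ℕ) (φ : ℕ → ℝ) :
    ∑ l ∈ range (p + 1), cCoef φ l = phiAtOne p φ := by
  rw [Finset.sum_range_succ' (cCoef φ) p]
  have h1 : ∀ i, cCoef φ (i + 1) = -φ (i + 1) := fun i => by simp [cCoef]
  have h2 : ∑ k ∈ Finset.Icc 1 p, φ k = ∑ i ∈ range p, φ (1 + i) := by
    rw [← Finset.Ico_add_one_right_eq_Icc, Finset.sum_Ico_eq_sum_range]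
    simp
  simp only [h1, phiAtOne, h2, cCoef]
  simp [add_comm, Finset.sum_neg_distrib]
  ring

lemma gamma_zero (p : ℕ) (φ : ℕ → ℝ) {k : ℕ} (hk : p < k) : gammaU p φ k = 0 := by
  simp [gammaU, Nat.not_le.mpr hk]

lemma tri1 (p : ℕ) (g : ℕ → ℕ → ℝ) :
    ∑ a ∈ range (p + 1), ∑ l ∈ range (p - a + 1), g l (l + a)
      = ∑ l ∈ range (p + 1), ∑ m ∈ Icc l p, g l m := by
  have step1 : ∀ a ∈ range (p + 1),
      ∑ l ∈ range (p - a + 1), g l (l + a)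
        = ∑ l ∈ range (p + 1), if l + a ≤ p then g l (l + a) else 0 := by
    intro a ha
    simp only [Finset.mem_range] at ha
    rw [← Finset.sum_subset (Finset.range_subset_range.mpr (by omega : p - a + 1 ≤ p + 1))
      (by intro l hl hl2; simp only [Finset.mem_range] at hl hl2; rw [if_neg]; omega)]
    apply Finset.sum_congr rfl
    intro l hl
    simp only [Finset.mem_range] at hl
    rw [if_pos (by omega)]
  rw [Finset.sum_congr rfl step1, Finset.sum_comm]
  apply Finset.sum_congr rfl
  intro l hl
  simp only [Finset.mem_range] at hl
  rw [← Finset.Ico_add_one_right_eq_Icc, Finset.sum_Ico_eq_sum_range]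
  rw [← Finset.sum_subset (Finset.range_subset_range.mpr (by omega : p + 1 - l ≤ p + 1))
      (by intro a h1 h2; simp only [Finset.mem_range] at h1 h2; rw [if_neg]; omega)]
  apply Finset.sum_congr rfl
  intro a h1
  simp only [Finset.mem_range] at h1
  rw [if_pos (by omega), Nat.add_comm l a]

lemma tri1' (p : ℕ) (g : ℕ → ℕ → ℝ) :
    ∑ a ∈ Icc 1 p, ∑ l ∈ range (p - a + 1), g l (l + a)
      = ∑ l ∈ range (p + 1), ∑ m ∈ Icc (l + 1) p, g l m := by
  have h := tri1 p g
  have hins : range (p + 1) = insert 0 (Icc 1 p) := by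
    ext x; simp [Finset.mem_range, Finset.mem_Icc]; omega
  rw [hins, Finset.sum_insert (by simp)] at h
  rw [← hins] at h
  simp only [Nat.sub_zero, Nat.add_zero] at h
  have hsplit : ∀ l ∈ range (p + 1),
      ∑ m ∈ Icc l p, g l m = g l l + ∑ m ∈ Icc (l + 1) p, g l m := by
    intro l hl
    simp only [Finset.mem_range] at hl
    rw [Finset.Icc_add_one_left_eq_Ioc, Finset.add_sum_Ioc_eq_sum_Icc (by omega : l ≤ p)]
  rw [Finset.sum_congr rfl hsplit, Finset.sum_add_distrib] at h
  exact add_left_cancel h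

lemma tri2 (p : ℕ) (g : ℕ → ℕ → ℝ) :
    ∑ l ∈ range (p + 1), ∑ m ∈ Icc (l + 1) p, g l m
      = ∑ m ∈ range (p + 1), ∑ l ∈ range m, g l m := by
  have step1 : ∀ l ∈ range (p + 1),
      ∑ m ∈ Icc (l + 1) p, g l m
        = ∑ m ∈ range (p + 1), if l < m then g l m else 0 := by
    intro l hl
    have hsub : Icc (l + 1) p ⊆ range (p + 1) := by
      intro m hm
      simp only [Finset.mem_Icc] at hm
      simp only [Finset.mem_range]
      omega
    have hz : ∀ m ∈ range (p + 1), m ∉ Icc (l + 1) p →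
        (if l < m then g l m else 0) = 0 := by
      intro m h1 h2
      simp only [Finset.mem_range] at h1
      simp only [Finset.mem_Icc, not_and, not_le] at h2
      rw [if_neg]; omega
    rw [← Finset.sum_subset hsub hz]
    apply Finset.sum_congr rfl
    intro m hm; simp only [Finset.mem_Icc] at hm; rw [if_pos (by omega)]
  rw [Finset.sum_congr rfl step1, Finset.sum_comm]
  apply Finset.sum_congr rfl
  intro m hm
  simp only [Finset.mem_range] at hm
  rw [← Finset.sum_subset (Finset.range_subset_range.mpr (by omega : m ≤ p + 1))
      (by intro l h1 h2; simp only [Finset.mem_range] at h1 h2; rw [if_neg]; omega)]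
  apply Finset.sum_congr rfl
  intro l hl; simp only [Finset.mem_range] at hl; rw [if_pos hl]

lemma fullSum (p : ℕ) (φ : ℕ → ℝ) :
    ∑ a ∈ range (p + 1), gammaU p φ a + ∑ a ∈ Icc 1 p, gammaU p φ a
      = phiAtOne p φ ^ 2 := by
  have hg1 : ∀ a ∈ range (p + 1),
      gammaU p φ a = ∑ l ∈ range (p - a + 1), cCoef φ l * cCoef φ (l + a) := by
    intro a ha; simp only [Finset.mem_range] at ha; rw [gammaU, if_pos (by omega)]
  have hg2 : ∀ a ∈ Icc 1 p,
      gammaU p φ a = ∑ l ∈ range (p - a + 1), cCoef φ l * cCoef φ (l + a) := by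
    intro a ha; simp only [Finset.mem_Icc] at ha; rw [gammaU, if_pos ha.2]
  rw [Finset.sum_congr rfl hg1, Finset.sum_congr rfl hg2,
    tri1 p (fun l m => cCoef φ l * cCoef φ m),
    tri1' p (fun l m => cCoef φ l * cCoef φ m),
    tri2 p (fun l m => cCoef φ l * cCoef φ m)]
  have key : ∀ l ∈ range (p + 1),
      (∑ m ∈ Icc l p, cCoef φ l * cCoef φ m) + ∑ m ∈ range l, cCoef φ m * cCoef φ l
        = cCoef φ l * phiAtOne p φ := by
    intro l hl
    simp only [Finset.mem_range] at hl
    rw [← Finset.mul_sum]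
    have : ∑ m ∈ range l, cCoef φ m * cCoef φ l = cCoef φ l * ∑ m ∈ range l, cCoef φ m := by
      rw [Finset.mul_sum]; apply Finset.sum_congr rfl; intros; ring
    rw [this, ← mul_add, ← sum_c_eq p φ]
    congr 1
    rw [add_comm, Finset.range_eq_Ico, ← Finset.Ico_add_one_right_eq_Icc,
      Finset.sum_Ico_consecutive _ (Nat.zero_le l) (by omega), Finset.range_eq_Ico]
  rw [← Finset.sum_add_distrib, Finset.sum_congr rfl key, ← Finset.sum_mul, sum_c_eq, sq]

lemma distSum (n j : ℕ) (hj : j < n) (f : ℕ → ℝ) :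
    ∑ i ∈ range n, f (Nat.dist i j)
      = ∑ a ∈ range (j + 1), f a + ∑ a ∈ Icc 1 (n - 1 - j), f a := by
  rw [Finset.range_eq_Ico,
    ← Finset.sum_Ico_consecutive _ (Nat.zero_le (j + 1)) (by omega : j + 1 ≤ n)]
  congr 1
  · rw [Nat.Ico_zero_eq_range, ← Finset.sum_range_reflect f (j + 1)]
    apply Finset.sum_congr rfl
    intro i hi
    simp only [Finset.mem_range] at hi
    rw [Nat.dist_eq_sub_of_le (by omega : i ≤ j)]
    norm_num
  · rw [Finset.sum_Ico_eq_sum_range, ← Finset.Ico_add_one_right_eq_Icc, Finset.sum_Ico_eq_sum_range]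
    apply Finset.sum_congr (by congr 1; omega)
    intro k hk
    simp only [Finset.mem_range] at hk
    rw [Nat.dist_eq_sub_of_le_right (by omega : j ≤ j + 1 + k)]
    congr 1
    omega

lemma truncR (p m : ℕ) (φ : ℕ → ℝ) (h : p ≤ m) :
    ∑ a ∈ range (m + 1), gammaU p φ a = ∑ a ∈ range (p + 1), gammaU p φ a := by
  symm
  apply Finset.sum_subset (Finset.range_subset_range.mpr (by omega))
  intro a h1 h2
  simp only [Finset.mem_range] at h1 h2
  exact gamma_zero p φ (by omega)

lemma truncI (p m : ℕ) (φ : ℕ → ℝ) (h : p ≤ m) :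
    ∑ a ∈ Icc 1 m, gammaU p φ a = ∑ a ∈ Icc 1 p, gammaU p φ a := by
  symm
  apply Finset.sum_subset (Finset.Icc_subset_Icc_right h)
  intro a h1 h2
  simp only [Finset.mem_Icc] at h1 h2
  exact gamma_zero p φ (by omega)

lemma smallSplit (p j1 : ℕ) (φ : ℕ → ℝ) (h : j1 ≤ p) :
    ∑ a ∈ range (j1 : ℕ), gammaU p φ a
      = ∑ a ∈ range (p + 1), gammaU p φ a - ∑ a ∈ Icc j1 p, gammaU p φ a := by
  rw [eq_sub_iff_add_eq, Finset.range_eq_Ico, ← Finset.Ico_add_one_right_eq_Icc,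
    Finset.sum_Ico_consecutive _ (Nat.zero_le j1) (by omega : j1 ≤ p + 1),
    Nat.Ico_zero_eq_range]

lemma omega_col_small (n p : ℕ) (hn : 2 * p ≤ n) (φ : ℕ → ℝ) (j : Fin n)
    (hj : j.val + 1 ≤ p) :
    ∑ i : Fin n, OmegaMat n p φ i j = epsilonSum p φ (j.val + 1) := by
  have hpn : p ≤ n := by omega
  have h1 : ∀ i : Fin n, OmegaMat n p φ i j
      = (if i.val + 1 ≤ p then OmegaEntry p φ (i.val + 1) (j.val + 1) else 0) := by
    intro i
    simp only [OmegaMat, Matrix.of_apply]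
    rw [if_neg (show ¬(n ≤ i.val + p ∧ n ≤ j.val + p) by omega), add_zero]
    by_cases h : i.val + 1 ≤ p
    · rw [if_pos ⟨h, hj⟩, if_pos h]
    · rw [if_neg (by tauto), if_neg h]
  rw [Finset.sum_congr rfl (fun i _ => h1 i), Fin.sum_univ_eq_sum_range
    (fun i => if i + 1 ≤ p then OmegaEntry p φ (i + 1) (j.val + 1) else 0) n]
  rw [← Finset.sum_subset (Finset.range_subset_range.mpr hpn)
      (by intro i hh1 hh2; simp only [Finset.mem_range] at hh1 hh2; rw [if_neg]; omega)]
  rw [epsilonSum, ← Finset.Ico_add_one_right_eq_Icc, Finset.sum_Ico_eq_sum_range]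
  apply Finset.sum_congr (by congr 1)
  intro i hi
  simp only [Finset.mem_range] at hi
  rw [if_pos (by omega), Nat.add_comm 1 i]

lemma omega_col_mid (n p : ℕ) (φ : ℕ → ℝ) (j : Fin n)
    (hj1 : p < j.val + 1) (hj2 : j.val + 1 ≤ n - p) :
    ∑ i : Fin n, OmegaMat n p φ i j = 0 := by
  apply Finset.sum_eq_zero
  intro i _
  simp only [OmegaMat, Matrix.of_apply]
  have hlt := j.isLt
  rw [if_neg (show ¬(i.val + 1 ≤ p ∧ j.val + 1 ≤ p) by omega),
    if_neg (show ¬(n ≤ i.val + p ∧ n ≤ j.val + p) by omega), add_zero]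

lemma entry_flip (n p : ℕ) (φ : ℕ → ℝ) (i j : Fin n) :
    (GammaDot n p φ - OmegaMat n p φ) (Fin.rev i) (Fin.rev j)
      = (GammaDot n p φ - OmegaMat n p φ) i j := by
  have hi := i.isLt
  have hj := j.isLt
  simp only [Matrix.sub_apply, GammaDot, OmegaMat, Matrix.of_apply, Fin.val_rev]
  have hdist : Nat.dist (n - (i.val + 1)) (n - (j.val + 1)) = Nat.dist i.val j.val := by
    simp only [Nat.dist]; omega
  rw [hdist]
  congr 1
  have hA : (if n - (i.val + 1) + 1 ≤ p ∧ n - (j.val + 1) + 1 ≤ p then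
        OmegaEntry p φ (n - (i.val + 1) + 1) (n - (j.val + 1) + 1) else 0)
      = (if n ≤ i.val + p ∧ n ≤ j.val + p then
        OmegaEntry p φ (n - i.val) (n - j.val) else 0) := by
    rw [show n - (i.val + 1) + 1 = n - i.val from by omega,
      show n - (j.val + 1) + 1 = n - j.val from by omega]
    exact if_congr (by omega) rfl rfl
  have hB : (if n ≤ n - (i.val + 1) + p ∧ n ≤ n - (j.val + 1) + p then
        OmegaEntry p φ (n - (n - (i.val + 1))) (n - (n - (j.val + 1))) else 0)
      = (if i.val + 1 ≤ p ∧ j.val + 1 ≤ p then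
        OmegaEntry p φ (i.val + 1) (j.val + 1) else 0) := by
    rw [show n - (n - (i.val + 1)) = i.val + 1 from by omega,
      show n - (n - (j.val + 1)) = j.val + 1 from by omega]
    exact if_congr (by omega) rfl rfl
  rw [hA, hB, add_comm]

lemma rowSum_flip (n p : ℕ) (φ : ℕ → ℝ) (j : Fin n) :
    rowSum n p φ (Fin.rev j) = rowSum n p φ j := by
  rw [rowSum, rowSum, ← Equiv.sum_comp (Fin.revPerm)
    (fun i => (GammaDot n p φ - OmegaMat n p φ) i (Fin.rev j))]
  exact Finset.sum_congr rfl fun i _ => entry_flip n p φ i j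

theorem rowSum_zindeWalsh (p n : ℕ) (hp : 1 ≤ p) (hn : 2 * p ≤ n) (φ : ℕ → ℝ) :
    (∀ j : Fin n, j.val + 1 ≤ p →
      rowSum n p φ j = phiAtOne p φ ^ 2 - kappa p φ (j.val + 1) - epsilonSum p φ (j.val + 1)) ∧
    (∀ j : Fin n, p < j.val + 1 → j.val + 1 ≤ n - p →
      rowSum n p φ j = phiAtOne p φ ^ 2) ∧
    (∀ j j' : Fin n, n - p < j.val + 1 → j'.val + 1 = n + 1 - (j.val + 1) →
      rowSum n p φ j = rowSum n p φ j') := by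
  refine ⟨?_, ?_, ?_⟩
  · intro j hj
    have hjlt := j.isLt
    have hΓ : ∑ i : Fin n, GammaDot n p φ i j
        = phiAtOne p φ ^ 2 - kappa p φ (j.val + 1) := by
      rw [show (∑ i : Fin n, GammaDot n p φ i j)
            = ∑ i ∈ range n, gammaU p φ (Nat.dist i j.val) from
          Fin.sum_univ_eq_sum_range (fun i => gammaU p φ (Nat.dist i j.val)) n,
        distSum n j.val hjlt (gammaU p φ), smallSplit p (j.val + 1) φ (by omega),
        truncI p (n - 1 - j.val) φ (by omega), kappa]
      have := fullSum p φ
      linarith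
    have hΩ := omega_col_small n p hn φ j hj
    rw [rowSum]
    simp only [Matrix.sub_apply]
    rw [Finset.sum_sub_distrib, hΓ, hΩ]
  · intro j hj1 hj2
    have hjlt := j.isLt
    have hΓ : ∑ i : Fin n, GammaDot n p φ i j = phiAtOne p φ ^ 2 := by
      rw [show (∑ i : Fin n, GammaDot n p φ i j)
            = ∑ i ∈ range n, gammaU p φ (Nat.dist i j.val) from
          Fin.sum_univ_eq_sum_range (fun i => gammaU p φ (Nat.dist i j.val)) n,
        distSum n j.val hjlt (gammaU p φ), truncR p j.val φ (by omega),
        truncI p (n - 1 - j.val) φ (by omega), fullSum]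
    have hΩ := omega_col_mid n p φ j hj1 hj2
    rw [rowSum]
    simp only [Matrix.sub_apply]
    rw [Finset.sum_sub_distrib, hΓ, hΩ, sub_zero]
  · intro j j' _ h2
    have hjlt := j.isLt
    have hj'lt := j'.isLt
    have : j' = Fin.rev j := by
      apply Fin.ext
      simp only [Fin.val_rev]
      omega
    rw [this, rowSum_flip]
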